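/- In the constant-gap model B₁ with impatience, if the critical headways satisfy T_1 ≥ T_2 ≥ ⋯ ≥ T_min > 0, then the mean service time E[Y] = Σ_{k=0}^∞ e^{-q T_{k+1}} [k/q + T_{k+1} - Σ_{i=1}^k T_i e^{-q T_i}/(1 - e^{-q T_i})] ∏_{j=1}^k (1 - e^{-q T_j}) is finite, and satisfies E[Y] ≤ (e^{q T_1} - 1)/q. -/

import Mathlib

open Real Finset

section B1Aux

variable (q : ℝ) (T : ℕ → ℝ)

/-- success probability of attempt `k+1` -/
noncomputable def B1p (k : ℕ) : ℝ := Real.exp (-q * T k)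

/-- failure probability of attempt `k+1` -/
noncomputable def B1a (k : ℕ) : ℝ := 1 - B1p q T k

/-- probability the first `k` attempts all fail -/
noncomputable def B1W (k : ℕ) : ℝ := ∏ j ∈ Finset.range k, B1a q T j

/-- conditional mean waiting time of a failed attempt -/
noncomputable def B1m (k : ℕ) : ℝ := 1 / q - T k * B1p q T k / B1a q T k

/-- the `k`-th term of the mean service time series -/
noncomputable def B1f (k : ℕ) : ℝ :=
  B1p q T k *
      ((k : ℝ) / q + T k -
        ∑ i ∈ Finset.range k, T i * B1p q T i / B1a q T i) *
    B1W q T k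

variable {q T}

lemma B1p_pos (k : ℕ) : 0 < B1p q T k := Real.exp_pos _

lemma B1p_lt_one (hq : 0 < q) (hT : ∀ k, 0 < T k) (k : ℕ) : B1p q T k < 1 := by
  have : -q * T k < 0 := by nlinarith [hT k]
  simpa [B1p] using Real.exp_lt_one_iff.mpr this

lemma B1a_pos (hq : 0 < q) (hT : ∀ k, 0 < T k) (k : ℕ) : 0 < B1a q T k := by
  have := B1p_lt_one hq hT k; simp [B1a]; linarith

lemma B1a_lt_one (k : ℕ) : B1a q T k < 1 := by
  have := B1p_pos (q := q) (T := T) k; simp [B1a]; linarith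

lemma B1W_nonneg (hq : 0 < q) (hT : ∀ k, 0 < T k) (k : ℕ) : 0 ≤ B1W q T k :=
  Finset.prod_nonneg fun j _ => (B1a_pos hq hT j).le

lemma B1m_nonneg (hq : 0 < q) (hT : ∀ k, 0 < T k) (k : ℕ) : 0 ≤ B1m q T k := by
  have ha := B1a_pos hq hT k
  have hp := B1p_pos (q := q) (T := T) k
  have h1 : q * T k + 1 ≤ Real.exp (q * T k) := Real.add_one_le_exp _
  have h2 : Real.exp (q * T k) * B1p q T k = 1 := by
    rw [B1p, ← Real.exp_add]; ring_nf; exact Real.exp_zero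
  have h3 : (q * T k + 1) * B1p q T k ≤ 1 := by nlinarith
  have h4 : q * (T k * B1p q T k) ≤ B1a q T k := by
    simp only [B1a]; nlinarith
  have h5 : T k * B1p q T k / B1a q T k ≤ 1 / q := by
    rw [div_le_div_iff₀ ha hq]; nlinarith
  simp only [B1m]; linarith

lemma B1key (hq : 0 < q) (hT : ∀ k, 0 < T k) (k : ℕ) :
    B1a q T k * B1m q T k = B1a q T k / q - T k * B1p q T k := by
  have ha := (B1a_pos hq hT k).ne'
  rw [B1m, mul_sub, mul_div_assoc' (B1a q T k) (T k * B1p q T k) (B1a q T k), mul_div_cancel_left₀ _ ha]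
  ring

/-- the main finite identity -/
lemma B1identity (hq : 0 < q) (hT : ∀ k, 0 < T k) (n : ℕ) :
    (∑ k ∈ Finset.range n, B1f q T k) + B1W q T n * (∑ j ∈ Finset.range n, B1m q T j) =
      (1 / q) * ∑ k ∈ Finset.range n, B1W q T (k + 1) := by
  induction n with
  | zero => simp [B1W]
  | succ n ih =>
    have hfn : B1f q T n = B1p q T n * (T n + ∑ j ∈ Finset.range n, B1m q T j) * B1W q T n := by
      have : ∑ j ∈ Finset.range n, B1m q T j =
          (n : ℝ) / q - ∑ i ∈ Finset.range n, T i * B1p q T i / B1a q T i := by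
        simp [B1m, Finset.sum_sub_distrib, Finset.sum_const, card_range]
        ring
      rw [B1f, this]; ring
    have hWs : B1W q T (n + 1) = B1W q T n * B1a q T n := Finset.prod_range_succ _ _
    have hkey := B1key hq hT n
    rw [Finset.sum_range_succ, Finset.sum_range_succ (f := B1m q T),
      Finset.sum_range_succ (f := fun k => B1W q T (k + 1)), hfn, hWs]
    have han : B1a q T n = 1 - B1p q T n := rfl
    rw [han] at hkey ⊢
    linear_combination ih + B1W q T n * hkey

lemma B1geom (x : ℝ) (h0 : 0 ≤ x) (h1 : x < 1) (n : ℕ) :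
    ∑ i ∈ Finset.range n, x ^ i ≤ (1 - x)⁻¹ := by
  have hne : x ≠ 1 := ne_of_lt h1
  rw [geom_sum_eq hne]
  have hxn : 0 ≤ x ^ n := pow_nonneg h0 n
  have h2 : 0 < 1 - x := by linarith
  rw [div_le_iff_of_neg (by linarith : x - 1 < 0)]
  have h3 : (1 - x)⁻¹ * (x - 1) = -1 := by field_simp; ring
  rw [h3]; linarith

end B1Aux

/-- Model B₁ with impatience: for nonincreasing critical headways `T 0 ≥ T 1 ≥ ⋯ ≥ Tmin > 0`
(0-indexed, `T k` is the headway at attempt `k+1`), the mean service time series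
`Σ_k e^{-q T_{k+1}} [k/q + T_{k+1} - Σ_{i=1}^k T_i e^{-q T_i}/(1 - e^{-q T_i})] ∏_{j=1}^k (1 - e^{-q T_j})`
converges, and its sum is at most `(e^{q T_1} - 1)/q`. -/
theorem mean_service_time_B1_impatience (q Tmin : ℝ) (T : ℕ → ℝ) (hq : 0 < q)
    (hmono : ∀ k : ℕ, T (k + 1) ≤ T k) (hmin : ∀ k : ℕ, Tmin ≤ T k) (hminpos : 0 < Tmin) :
    Summable (fun k : ℕ =>
      Real.exp (-q * T k) *
        ((k : ℝ) / q + T k -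
          ∑ i ∈ Finset.range k, T i * Real.exp (-q * T i) / (1 - Real.exp (-q * T i))) *
        ∏ j ∈ Finset.range k, (1 - Real.exp (-q * T j))) ∧
    ∑' k : ℕ,
      Real.exp (-q * T k) *
        ((k : ℝ) / q + T k -
          ∑ i ∈ Finset.range k, T i * Real.exp (-q * T i) / (1 - Real.exp (-q * T i))) *
        ∏ j ∈ Finset.range k, (1 - Real.exp (-q * T j))
      ≤ (Real.exp (q * T 0) - 1) / q := by
  have hT : ∀ k, 0 < T k := fun k => lt_of_lt_of_le hminpos (hmin k)
  have hT0 : ∀ k, T k ≤ T 0 := by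
    intro k; induction k with
    | zero => exact le_refl (T 0)
    | succ n ih => exact (hmono n).trans ih
  -- the statement's function is B1f
  have hfun : (fun k : ℕ =>
      Real.exp (-q * T k) *
        ((k : ℝ) / q + T k -
          ∑ i ∈ Finset.range k, T i * Real.exp (-q * T i) / (1 - Real.exp (-q * T i))) *
        ∏ j ∈ Finset.range k, (1 - Real.exp (-q * T j))) = B1f q T := by
    funext k; simp [B1f, B1p, B1a, B1W]
  -- nonnegativity of terms
  have hm := B1m_nonneg (q := q) (T := T) hq hT
  have hfnn : ∀ k, 0 ≤ B1f q T k := by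
    intro k
    have hc : 0 ≤ (k : ℝ) / q + T k -
        ∑ i ∈ Finset.range k, T i * B1p q T i / B1a q T i := by
      have : ∑ j ∈ Finset.range k, B1m q T j =
          (k : ℝ) / q - ∑ i ∈ Finset.range k, T i * B1p q T i / B1a q T i := by
        simp [B1m, Finset.sum_sub_distrib, Finset.sum_const, card_range]
        ring
      have hs : 0 ≤ ∑ j ∈ Finset.range k, B1m q T j :=
        Finset.sum_nonneg fun j _ => hm j
      have := hT k
      linarith [this, hs]
    exact mul_nonneg (mul_nonneg (B1p_pos k).le hc) (B1W_nonneg hq hT k)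
  -- bound on partial sums
  have hbound : ∀ n, ∑ k ∈ Finset.range n, B1f q T k ≤ (Real.exp (q * T 0) - 1) / q := by
    intro n
    have hid := B1identity hq hT n
    have hWm : 0 ≤ B1W q T n * ∑ j ∈ Finset.range n, B1m q T j :=
      mul_nonneg (B1W_nonneg hq hT n) (Finset.sum_nonneg fun j _ => hm j)
    have h1 : ∑ k ∈ Finset.range n, B1f q T k ≤
        (1 / q) * ∑ k ∈ Finset.range n, B1W q T (k + 1) := by linarith
    -- W (k+1) ≤ a 0 ^ (k+1)
    have hamono : ∀ j, B1a q T j ≤ B1a q T 0 := by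
      intro j
      have : Real.exp (-q * T 0) ≤ Real.exp (-q * T j) :=
        Real.exp_le_exp.mpr (by nlinarith [hT0 j])
      simp only [B1a, B1p]; linarith
    have hW : ∀ k, B1W q T (k + 1) ≤ B1a q T 0 ^ (k + 1) := by
      intro k
      calc B1W q T (k + 1) ≤ ∏ _j ∈ Finset.range (k + 1), B1a q T 0 :=
            Finset.prod_le_prod (fun j _ => (B1a_pos hq hT j).le) (fun j _ => hamono j)
        _ = B1a q T 0 ^ (k + 1) := by simp
    have hsumW : ∑ k ∈ Finset.range n, B1W q T (k + 1) ≤ Real.exp (q * T 0) - 1 := by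
      have h2 : ∑ k ∈ Finset.range n, B1W q T (k + 1) ≤
          ∑ k ∈ Finset.range n, B1a q T 0 ^ (k + 1) :=
        Finset.sum_le_sum fun k _ => hW k
      have h3 : ∑ k ∈ Finset.range n, B1a q T 0 ^ (k + 1) =
          B1a q T 0 * ∑ k ∈ Finset.range n, B1a q T 0 ^ k := by
        rw [Finset.mul_sum]; exact Finset.sum_congr rfl fun k _ => by ring
      have ha0 := B1a_pos hq hT 0
      have ha1 := B1a_lt_one (q := q) (T := T) 0
      have h4 : ∑ k ∈ Finset.range n, B1a q T 0 ^ k ≤ (1 - B1a q T 0)⁻¹ :=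
        B1geom _ ha0.le ha1 n
      have hp0 : (1 : ℝ) - B1a q T 0 = B1p q T 0 := by simp [B1a]
      have hpinv : (B1p q T 0)⁻¹ = Real.exp (q * T 0) := by
        rw [B1p, ← Real.exp_neg]; ring_nf
      have h5 : B1a q T 0 * (1 - B1a q T 0)⁻¹ = Real.exp (q * T 0) - 1 := by
        rw [hp0, B1a, hpinv]
        have hpp := B1p_pos (q := q) (T := T) 0
        rw [B1p] at hpp ⊢
        field_simp
        have hmul : Real.exp (-(q * T 0)) * Real.exp (q * T 0) = 1 := by
          rw [← Real.exp_add]; simp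
        linear_combination -hmul
      calc ∑ k ∈ Finset.range n, B1W q T (k + 1) ≤
            B1a q T 0 * ∑ k ∈ Finset.range n, B1a q T 0 ^ k := by rw [← h3]; exact h2
        _ ≤ B1a q T 0 * (1 - B1a q T 0)⁻¹ := by
            exact mul_le_mul_of_nonneg_left h4 ha0.le
        _ = Real.exp (q * T 0) - 1 := h5
    calc ∑ k ∈ Finset.range n, B1f q T k ≤
          (1 / q) * ∑ k ∈ Finset.range n, B1W q T (k + 1) := h1
      _ ≤ (1 / q) * (Real.exp (q * T 0) - 1) := by
          exact mul_le_mul_of_nonneg_left hsumW (by positivity)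
      _ = (Real.exp (q * T 0) - 1) / q := by ring
  rw [hfun]
  have hsummable : Summable (B1f q T) := summable_of_sum_range_le hfnn hbound
  exact ⟨hsummable, hsummable.tsum_le_of_sum_range_le hbound⟩
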